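/- Suppose U(t) := exp(-(t₁-t)A₊)(I + W(t₁-t)(S - P₊)) is invertible for all relevant times, where W(τ) := W - exp(τA₊)W exp(τA₊*). Then for t ≤ s ≤ t₁: U(t)U(s)⁻¹ = exp((t-s)A₊) - W(t-s) exp((t₁-t)A₊*) S̃(t₁-s) exp((t₁-s)A₊), where S̃(τ) := (S - P₊)(I + W(τ)(S - P₊))⁻¹. -/

import Mathlib

open Matrix MeasureTheory NormedSpace
open scoped Matrix.Norms.L2Operator

lemma expE {n : ℕ} (A : Matrix (Fin n) (Fin n) ℝ) (a b : ℝ) :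
    NormedSpace.exp (a • A) * NormedSpace.exp (b • A) = NormedSpace.exp ((a + b) • A) := by
  rw [add_smul]
  exact (Matrix.exp_add_of_commute _ _ (((Commute.refl A).smul_left a).smul_right b)).symm

lemma expE0 {n : ℕ} (A : Matrix (Fin n) (Fin n) ℝ) :
    NormedSpace.exp ((0:ℝ) • A) = 1 := by rw [zero_smul, exp_zero]

lemma keyW {n : ℕ} (A W : Matrix (Fin n) (Fin n) ℝ) (τ σ : ℝ) :
    NormedSpace.exp ((-τ) • A) *
        ((W - NormedSpace.exp (τ • A) * W * NormedSpace.exp (τ • Aᵀ)) - (W - NormedSpace.exp (σ • A) * W * NormedSpace.exp (σ • Aᵀ))) =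
      -((W - NormedSpace.exp ((σ - τ) • A) * W * NormedSpace.exp ((σ - τ) • Aᵀ)) * NormedSpace.exp (τ • Aᵀ)) := by
  have h1 : NormedSpace.exp ((-τ) • A) * NormedSpace.exp (τ • A) = 1 := by rw [expE, neg_add_cancel, expE0]
  have h2 : NormedSpace.exp ((-τ) • A) * NormedSpace.exp (σ • A) = NormedSpace.exp ((σ - τ) • A) := by
    rw [expE]; ring_nf
  have h3 : NormedSpace.exp ((σ - τ) • Aᵀ) * NormedSpace.exp (τ • Aᵀ) = NormedSpace.exp (σ • Aᵀ) := by
    rw [expE]; ring_nf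
  rw [sub_mul, neg_sub]
  rw [mul_assoc (NormedSpace.exp ((σ - τ) • A) * W), h3]
  simp only [mul_sub, ← mul_assoc, h1, h2, one_mul]
  abel

/-- Explicit formula for the state transition map `U(t)U(s)⁻¹` of the closed-loop
system, in terms of the Gramian `W(τ) = W - exp(τA₊) W exp(τA₊ᵀ)` and the sliding
terminal condition `S̃(τ) = (S - P₊)(I + W(τ)(S - P₊))⁻¹`. -/
theorem state_transition_forward_formula
    {n m : ℕ} (Ap : Matrix (Fin n) (Fin n) ℝ) (B : Matrix (Fin n) (Fin m) ℝ)
    (S P : Matrix (Fin n) (Fin n) ℝ) (t₁ : ℝ)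
    (hHurwitz : ∀ μ ∈ spectrum ℂ (Ap.map (algebraMap ℝ ℂ)), μ.re < 0)
    (hS : S.IsSymm) (hP : P.IsSymm)
    (W : Matrix (Fin n) (Fin n) ℝ)
    (hW : W = ∫ s in Set.Ioi (0 : ℝ), NormedSpace.exp (s • Ap) * B * Bᵀ * NormedSpace.exp (s • Apᵀ))
    (Wf : ℝ → Matrix (Fin n) (Fin n) ℝ)
    (hWf : ∀ τ, Wf τ = W - NormedSpace.exp (τ • Ap) * W * NormedSpace.exp (τ • Apᵀ))
    (hinv : ∀ τ : ℝ, 0 ≤ τ → IsUnit (1 + Wf τ * (S - P)))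
    (St : ℝ → Matrix (Fin n) (Fin n) ℝ)
    (hSt : ∀ τ, St τ = (S - P) * (1 + Wf τ * (S - P))⁻¹)
    (U : ℝ → Matrix (Fin n) (Fin n) ℝ)
    (hU : ∀ t, U t = NormedSpace.exp (-((t₁ - t) • Ap)) * (1 + Wf (t₁ - t) * (S - P)))
    (hUinv : ∀ t : ℝ, t ≤ t₁ → IsUnit (U t)) :
    ∀ t s : ℝ, t ≤ s → s ≤ t₁ →
      U t * (U s)⁻¹ =
        NormedSpace.exp ((t - s) • Ap) -
          Wf (t - s) * NormedSpace.exp ((t₁ - t) • Apᵀ) * St (t₁ - s) * NormedSpace.exp ((t₁ - s) • Ap) := by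
  intro t s hts hst1
  haveI := (hUinv s hst1).invertible
  rw [Matrix.mul_inv_eq_iff_eq_mul_of_invertible]
  set K := S - P with hK
  have hσ : (0:ℝ) ≤ t₁ - s := by linarith
  have hNdet : IsUnit (1 + Wf (t₁ - s) * K).det :=
    (Matrix.isUnit_iff_isUnit_det _).1 (hinv _ hσ)
  have hNinvN : (1 + Wf (t₁ - s) * K)⁻¹ * (1 + Wf (t₁ - s) * K) = 1 :=
    Matrix.nonsing_inv_mul _ hNdet
  rw [hU t, hU s, hSt]
  rw [← neg_smul, ← neg_smul]
  -- key identity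
  have hts' : t - s = (t₁ - s) - (t₁ - t) := by ring
  have hkey : NormedSpace.exp ((-(t₁ - t)) • Ap) * (Wf (t₁ - t) - Wf (t₁ - s)) =
      -(Wf (t - s) * NormedSpace.exp ((t₁ - t) • Apᵀ)) := by
    rw [hWf, hWf, hWf, hts']; exact keyW Ap W (t₁ - t) (t₁ - s)
  -- expand RHS product
  have hEcancel : NormedSpace.exp ((t₁ - s) • Ap) * NormedSpace.exp ((-(t₁ - s)) • Ap) = 1 := by
    rw [expE, add_neg_cancel, expE0]
  have hE2 : NormedSpace.exp ((t - s) • Ap) * NormedSpace.exp ((-(t₁ - s)) • Ap) = NormedSpace.exp ((-(t₁ - t)) • Ap) := by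
    rw [expE]; ring_nf
  have hkey' : NormedSpace.exp ((-(t₁ - t)) • Ap) * (Wf (t₁ - t) * K) =
      NormedSpace.exp ((-(t₁ - t)) • Ap) * (Wf (t₁ - s) * K) -
        Wf (t - s) * NormedSpace.exp ((t₁ - t) • Apᵀ) * K := by
    have h := congrArg (fun M => M * K) hkey
    simp only [sub_mul, neg_mul, mul_sub, mul_assoc] at h ⊢
    rw [eq_sub_iff_add_eq]
    rw [sub_eq_iff_eq_add] at h
    rw [h]; abel
  calc NormedSpace.exp ((-(t₁ - t)) • Ap) * (1 + Wf (t₁ - t) * K)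
      = NormedSpace.exp ((-(t₁ - t)) • Ap) + NormedSpace.exp ((-(t₁ - t)) • Ap) * (Wf (t₁ - t) * K) := by
        rw [mul_add, mul_one]
    _ = NormedSpace.exp ((-(t₁ - t)) • Ap) + NormedSpace.exp ((-(t₁ - t)) • Ap) * (Wf (t₁ - s) * K) -
          Wf (t - s) * NormedSpace.exp ((t₁ - t) • Apᵀ) * K := by rw [hkey']; abel
    _ = (NormedSpace.exp ((t - s) • Ap) -
          Wf (t - s) * NormedSpace.exp ((t₁ - t) • Apᵀ) * (K * (1 + Wf (t₁ - s) * K)⁻¹) *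
            NormedSpace.exp ((t₁ - s) • Ap)) * (NormedSpace.exp ((-(t₁ - s)) • Ap) * (1 + Wf (t₁ - s) * K)) := by
        rw [sub_mul]
        rw [show NormedSpace.exp ((t - s) • Ap) * (NormedSpace.exp ((-(t₁ - s)) • Ap) * (1 + Wf (t₁ - s) * K)) =
            NormedSpace.exp ((-(t₁ - t)) • Ap) * (1 + Wf (t₁ - s) * K) from by rw [← mul_assoc, hE2]]
        rw [show Wf (t - s) * NormedSpace.exp ((t₁ - t) • Apᵀ) * (K * (1 + Wf (t₁ - s) * K)⁻¹) *
              NormedSpace.exp ((t₁ - s) • Ap) * (NormedSpace.exp ((-(t₁ - s)) • Ap) * (1 + Wf (t₁ - s) * K)) =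
            Wf (t - s) * NormedSpace.exp ((t₁ - t) • Apᵀ) * K from ?_]
        · rw [mul_add, mul_one, add_sub_assoc]
        · calc Wf (t - s) * NormedSpace.exp ((t₁ - t) • Apᵀ) * (K * (1 + Wf (t₁ - s) * K)⁻¹) *
              NormedSpace.exp ((t₁ - s) • Ap) * (NormedSpace.exp ((-(t₁ - s)) • Ap) * (1 + Wf (t₁ - s) * K))
              = Wf (t - s) * NormedSpace.exp ((t₁ - t) • Apᵀ) * (K * ((1 + Wf (t₁ - s) * K)⁻¹ *
                  ((NormedSpace.exp ((t₁ - s) • Ap) * NormedSpace.exp ((-(t₁ - s)) • Ap)) *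
                    (1 + Wf (t₁ - s) * K)))) := by ring_nf; simp only [mul_assoc]
            _ = Wf (t - s) * NormedSpace.exp ((t₁ - t) • Apᵀ) * K := by
                rw [hEcancel, one_mul, hNinvN, mul_one]
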